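/- Let f, g, α be as in the standing assumptions. Then for every p ∈ (0,1) there exist z ∈ (0,p) and M ∈ ℕ such that (f ∪ g)^M([z,p]) = [g^M(z), 1] and [g^M(z), 1] ⊇ [α, 1]. -/
import Mathlib


open Set

/-- The n-th Mahavier product of a relation `F` on `X`: tuples `(x 0, …, x n)`
with `(x i, x (i+1)) ∈ F` for all `i < n`. -/
def Mahavier {X : Type*} (F : Set (X × X)) (n : ℕ) : Set (Fin (n + 1) → X) :=
  {x | ∀ i : Fin n, (x i.castSucc, x i.succ) ∈ F}

/-- A witness of CR-turbulence at length parameter `n`. -/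
def CRWitness {X : Type*} [TopologicalSpace X] (F : Set (X × X)) (n : ℕ) : Prop :=
  ∃ K L : Set (Fin (n + 1) → X),
    K.Nonempty ∧ L.Nonempty ∧ IsClosed K ∧ IsClosed L ∧
    K ⊆ Mahavier F n ∧ L ⊆ Mahavier F n ∧ Disjoint K L ∧
    ((fun x => x 0) '' K ∪ (fun x => x 0) '' L) ⊆
      ((fun x => x (Fin.last n)) '' K ∩ (fun x => x (Fin.last n)) '' L)

/-- A witness of reverse CR-turbulence at length parameter `n`. -/
def RevCRWitness {X : Type*} [TopologicalSpace X] (F : Set (X × X)) (n : ℕ) : Prop :=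
  ∃ K L : Set (Fin (n + 1) → X),
    K.Nonempty ∧ L.Nonempty ∧ IsClosed K ∧ IsClosed L ∧
    K ⊆ Mahavier F n ∧ L ⊆ Mahavier F n ∧ Disjoint K L ∧
    ((fun x => x (Fin.last n)) '' K ∪ (fun x => x (Fin.last n)) '' L) ⊆
      ((fun x => x 0) '' K ∩ (fun x => x 0) '' L)

/-- `F` is CR-turbulent. -/
def CRTurbulent {X : Type*} [TopologicalSpace X] (F : Set (X × X)) : Prop :=
  ∃ n : ℕ, 1 ≤ n ∧ CRWitness F n

/-- `F` is reverse CR-turbulent. -/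
def RevCRTurbulent {X : Type*} [TopologicalSpace X] (F : Set (X × X)) : Prop :=
  ∃ n : ℕ, 1 ≤ n ∧ RevCRWitness F n

/-- A self-map is separated turbulent. -/
def SepTurbulent {Z : Type*} [TopologicalSpace Z] (h : Z → Z) : Prop :=
  ∃ K L : Set Z, K.Nonempty ∧ L.Nonempty ∧ IsClosed K ∧ IsClosed L ∧
    Disjoint K L ∧ K ∪ L ⊆ h '' K ∩ h '' L

/-- A self-map is turbulent. -/
def Turbulent {Z : Type*} [TopologicalSpace Z] (h : Z → Z) : Prop :=
  ∃ K L : Set Z, K.Nonempty ∧ L.Nonempty ∧ IsClosed K ∧ IsClosed L ∧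
    (K ∩ L).Subsingleton ∧ K ∪ L ⊆ h '' K ∩ h '' L

/-- The infinite Mahavier product `X_F^+`. -/
def MahavierSeq {X : Type*} (F : Set (X × X)) : Set (ℕ → X) :=
  {x | ∀ i : ℕ, (x i, x (i + 1)) ∈ F}

/-- The shift map `σ_F^+` on `X_F^+`. -/
def shiftMap {X : Type*} (F : Set (X × X)) : MahavierSeq F → MahavierSeq F :=
  fun x => ⟨fun n => x.1 (n + 1), fun i => x.2 (i + 1)⟩

/-- With `f, g, α` as in the standing assumptions, for every `p ∈ (0,1)`
there are `z ∈ (0,p)` and `M ∈ ℕ` (positive) with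
`(f ∪ g)^M([z,p]) = [g^M(z), 1] ⊇ [α,1]`. -/
theorem stmt13 (a b : ℝ) (f g : ℝ → ℝ) (ha0 : 0 < a) (ha1 : a < 1)
    (hfc : ContinuousOn f (Set.Icc 0 a)) (hfi : Set.InjOn f (Set.Icc 0 a))
    (hfm : Set.MapsTo f (Set.Icc 0 a) (Set.Icc 0 1))
    (hf0 : f 0 = 0) (hfa : f a = 1) (hfgt : ∀ x, 0 < x → x ≤ a → x < f x)
    (hb0 : 0 < b) (hb1 : b < 1)
    (hgc : ContinuousOn g (Set.Icc 0 1)) (hgi : Set.InjOn g (Set.Icc 0 1))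
    (hgm : Set.MapsTo g (Set.Icc 0 1) (Set.Icc 0 1))
    (hg0 : g 0 = 0) (hg1 : g 1 = b) (hglt : ∀ x, 0 < x → x ≤ 1 → g x < x)
    (α : ℝ) (hα : α ∈ Set.Icc 0 a) (hfα : f α = g 1) :
    ∀ p, 0 < p → p < 1 → ∃ z M, 0 < z ∧ z < p ∧ 0 < M ∧
      (fun S : Set ℝ => f '' (S ∩ Set.Icc 0 a) ∪ g '' S)^[M] (Set.Icc z p) =
        Set.Icc (g^[M] z) 1 ∧
      Set.Icc α 1 ⊆ Set.Icc (g^[M] z) 1 := by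
  intro p hp0 hp1
  set T : Set ℝ → Set ℝ := fun S => f '' (S ∩ Set.Icc 0 a) ∪ g '' S with hT
  have hfmono : StrictMonoOn f (Icc 0 a) :=
    ContinuousOn.strictMonoOn_of_injOn_Icc ha0.le (by rw [hf0, hfa]; norm_num) hfc hfi
  have hgmono : StrictMonoOn g (Icc 0 1) :=
    ContinuousOn.strictMonoOn_of_injOn_Icc (by norm_num) (by rw [hg0, hg1]; exact hb0.le) hgc hgi
  have hα0 : 0 < α := by
    rcases hα.1.lt_or_eq with h | h
    · exact h
    · exfalso; rw [← h] at hfα; rw [hf0, hg1] at hfα; linarith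
  have hαa : α ≤ a := hα.2
  have hgpos : ∀ x, 0 < x → x ≤ 1 → 0 < g x := by
    intro x hx hx1
    rcases (hgm ⟨hx.le, hx1⟩).1.lt_or_eq with h | h
    · exact h
    · exfalso
      have := hgi ⟨hx.le, hx1⟩ ⟨le_refl 0, zero_le_one⟩ (by rw [← h, hg0])
      exact absurd this hx.ne'
  have himgf : ∀ u v : ℝ, 0 ≤ u → v ≤ a → u ≤ v → f '' Icc u v = Icc (f u) (f v) := by
    intro u v hu hv huv
    have hsub : Icc u v ⊆ Icc 0 a := Icc_subset_Icc hu hv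
    apply Subset.antisymm
    · rintro _ ⟨x, hx, rfl⟩
      exact ⟨hfmono.monotoneOn (hsub ⟨le_refl u, huv⟩) (hsub hx) hx.1,
             hfmono.monotoneOn (hsub hx) (hsub ⟨huv, le_refl v⟩) hx.2⟩
    · exact intermediate_value_Icc huv (hfc.mono hsub)
  have himgg : ∀ u v : ℝ, 0 ≤ u → v ≤ 1 → u ≤ v → g '' Icc u v = Icc (g u) (g v) := by
    intro u v hu hv huv
    have hsub : Icc u v ⊆ Icc 0 1 := Icc_subset_Icc hu hv
    apply Subset.antisymm
    · rintro _ ⟨x, hx, rfl⟩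
      exact ⟨hgmono.monotoneOn (hsub ⟨le_refl u, huv⟩) (hsub hx) hx.1,
             hgmono.monotoneOn (hsub hx) (hsub ⟨huv, le_refl v⟩) hx.2⟩
    · exact intermediate_value_Icc huv (hgc.mono hsub)
  have hgp : 0 < g p := hgpos p hp0 hp1.le
  have hgp1 : g p < 1 := lt_trans (hglt p hp0 hp1.le) hp1
  obtain ⟨c, hc, hfcp⟩ : ∃ c ∈ Icc (0:ℝ) a, f c = g p := by
    have hmem : g p ∈ Icc (f 0) (f a) := by rw [hf0, hfa]; exact ⟨hgp.le, hgp1.le⟩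
    exact intermediate_value_Icc ha0.le hfc hmem
  have hc0 : 0 < c := by
    rcases hc.1.lt_or_eq with h | h
    · exact h
    · exfalso; rw [← h, hf0] at hfcp; linarith
  set z := min c (min (p/2) α) with hzdef
  have hz0 : 0 < z := lt_min hc0 (lt_min (by linarith) hα0)
  have hzp : z < p :=
    lt_of_le_of_lt (le_trans (min_le_right _ _) (min_le_left _ _)) (by linarith)
  have hzα : z ≤ α := le_trans (min_le_right _ _) (min_le_right _ _)
  have hza : z ≤ a := hzα.trans hαa
  have hz1 : z < 1 := lt_trans hzp hp1
  have hfz : f z ≤ g p := by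
    rw [← hfcp]
    exact hfmono.monotoneOn ⟨hz0.le, hza⟩ hc (min_le_left _ _)
  have hit : ∀ k, 0 < g^[k] z ∧ g^[k] z ≤ z := by
    intro k; induction k with
    | zero => exact ⟨hz0, le_refl z⟩
    | succ k ih =>
      rw [Function.iterate_succ_apply']
      obtain ⟨h1, h2⟩ := ih
      have hle1 : g^[k] z ≤ 1 := le_trans h2 hz1.le
      exact ⟨hgpos _ h1 hle1, le_trans (hglt _ h1 hle1).le h2⟩
  have hstep : ∀ w v : ℝ, 0 < w → w ≤ z → p ≤ v → v ≤ 1 →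
      T (Icc w v) = Icc (g w) (f (min v a)) := by
    intro w v hw0 hwz hpv hv1
    have hwv : w ≤ v := le_trans hwz (le_trans hzp.le hpv)
    have hwa : w ≤ a := le_trans hwz hza
    have hw1 : w ≤ 1 := le_trans hwv hv1
    have hv0 : 0 ≤ v := le_trans hp0.le hpv
    have hma : min v a ≤ a := min_le_right _ _
    have hwm : w ≤ min v a := le_min hwv hwa
    have hinter : Icc w v ∩ Icc 0 a = Icc w (min v a) := by
      ext x
      simp only [mem_inter_iff, mem_Icc, le_min_iff]
      constructor
      · rintro ⟨⟨h1, h2⟩, _, h4⟩; exact ⟨h1, h2, h4⟩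
      · rintro ⟨h1, h2, h3⟩; exact ⟨⟨h1, h2⟩, le_trans hw0.le h1, h3⟩
    have hIf : f '' (Icc w v ∩ Icc 0 a) = Icc (f w) (f (min v a)) := by
      rw [hinter]; exact himgf w (min v a) hw0.le hma hwm
    have hIg : g '' Icc w v = Icc (g w) (g v) := himgg w v hw0.le hv1 hwv
    have h1 : g w ≤ f w := le_trans (hglt w hw0 hw1).le (hfgt w hw0 hwa).le
    have h2 : f w ≤ g v := by
      calc f w ≤ f z := hfmono.monotoneOn ⟨hw0.le, hwa⟩ ⟨hz0.le, hza⟩ hwz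
        _ ≤ g p := hfz
        _ ≤ g v := hgmono.monotoneOn ⟨hp0.le, hp1.le⟩ ⟨hv0, hv1⟩ hpv
    have h3 : g v ≤ f (min v a) := by
      rcases le_total v a with h | h
      · rw [min_eq_left h]
        exact le_trans (hglt v (lt_of_lt_of_le hp0 hpv) hv1).le
          (hfgt v (lt_of_lt_of_le hp0 hpv) h).le
      · rw [min_eq_right h, hfa]
        exact (hgm ⟨hv0, hv1⟩).2
    show f '' (Icc w v ∩ Set.Icc 0 a) ∪ g '' Icc w v = Icc (g w) (f (min v a))
    rw [hIf, hIg]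
    ext y
    simp only [mem_union, mem_Icc]
    constructor
    · rintro (⟨hy1, hy2⟩ | ⟨hy1, hy2⟩) <;> constructor <;> linarith
    · rintro ⟨hy1, hy2⟩
      rcases le_total y (g v) with h | h
      · exact Or.inr ⟨hy1, h⟩
      · exact Or.inl ⟨le_trans h2 h, hy2⟩
  set u : ℕ → ℝ := fun k => Nat.rec p (fun _ x => f (min x a)) k with hu
  have hu0 : u 0 = p := rfl
  have husucc : ∀ k, u (k + 1) = f (min (u k) a) := fun k => rfl
  have huinv : ∀ k, p ≤ u k ∧ u k ≤ 1 := by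
    intro k; induction k with
    | zero => exact ⟨le_refl p, hp1.le⟩
    | succ k ih =>
      obtain ⟨h1, h2⟩ := ih
      rw [husucc]
      have hm0 : (0:ℝ) ≤ min (u k) a := le_min (by linarith) ha0.le
      have hma : min (u k) a ≤ a := min_le_right _ _
      constructor
      · rcases le_total (u k) a with h | h
        · rw [min_eq_left h]; exact le_trans h1 (hfgt (u k) (by linarith) h).le
        · rw [min_eq_right h, hfa]; linarith
      · exact (hfm ⟨hm0, hma⟩).2
  have hmain : ∀ k, T^[k] (Icc z p) = Icc (g^[k] z) (u k) := by
    intro k; induction k with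
    | zero => simp [hu0]
    | succ k ih =>
      rw [Function.iterate_succ_apply', ih, Function.iterate_succ_apply' (f := g), husucc]
      exact hstep _ _ (hit k).1 (hit k).2 (huinv k).1 (huinv k).2
  have hK : ∃ K, u K = 1 ∧ 0 < K := by
    obtain ⟨K0, hK0⟩ : ∃ K0, a ≤ u K0 := by
      rcases le_total a p with h | h
      · exact ⟨0, h⟩
      · have hne : (Icc p a).Nonempty := ⟨p, le_refl p, h⟩
        have hsub : Icc p a ⊆ Icc 0 a := Icc_subset_Icc hp0.le le_rfl
        have hcont : ContinuousOn (fun x => f x - x) (Icc p a) :=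
          (hfc.mono hsub).sub continuousOn_id
        obtain ⟨x0, hx0, hmin⟩ := isCompact_Icc.exists_isMinOn hne hcont
        have hδ0 : 0 < f x0 - x0 :=
          sub_pos.mpr (hfgt x0 (lt_of_lt_of_le hp0 hx0.1) hx0.2)
        set δ := f x0 - x0 with hδ
        have hgrow : ∀ k : ℕ, a ≤ u k ∨ p + k * δ ≤ u k := by
          intro k; induction k with
          | zero => right; simp [hu0]
          | succ k ih =>
            rcases le_total a (u k) with h' | h'
            · left; rw [husucc, min_eq_right h', hfa]; linarith
            · rcases ih with h'' | h''
              · left; rw [husucc, min_eq_right h'', hfa]; linarith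
              · right
                rw [husucc, min_eq_left h']
                have hmem : u k ∈ Icc p a := ⟨(huinv k).1, h'⟩
                have hd : δ ≤ f (u k) - u k := isMinOn_iff.mp hmin _ hmem
                push_cast
                linarith
        obtain ⟨n, hn⟩ := exists_nat_gt ((a - p) / δ)
        refine ⟨n, ?_⟩
        rcases hgrow n with h' | h'
        · exact h'
        · have : (a - p) / δ * δ < n * δ := by
            exact mul_lt_mul_of_pos_right hn hδ0
          rw [div_mul_cancel₀ _ (ne_of_gt hδ0)] at this
          linarith
    refine ⟨K0 + 1, ?_, Nat.succ_pos _⟩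
    rw [husucc, min_eq_right hK0, hfa]
  obtain ⟨M, hM1, hM0⟩ := hK
  refine ⟨z, M, hz0, hzp, hM0, ?_, ?_⟩
  · rw [hmain M, hM1]
  · intro x hx
    exact ⟨le_trans (le_trans (hit M).2 hzα) hx.1, hx.2⟩
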